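/- Let φ(z) = 1 + z. There are no T_φ-inner functions: if f ∈ H² satisfies ∫_𝕋 (1+ξ)^n |f(ξ)|² dm(ξ) = 0 for all integers n ≥ 1, then f = 0. -/

import Mathlib

open MeasureTheory Complex Filter Metric Topology

/-- Normalized Lebesgue (arclength) measure on the unit circle `𝕋 ⊆ ℂ`. -/
noncomputable def mCirc : Measure ℂ :=
  Measure.map (fun θ : ℝ => Complex.exp (θ * Complex.I))
    ((ENNReal.ofReal (2 * Real.pi))⁻¹ • volume.restrict (Set.Ioc 0 (2 * Real.pi)))

/-- `f` is (the boundary function of) a function in the Hardy space `H²`: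
it is square integrable on `𝕋` and its negative Fourier coefficients vanish. -/
def MemH2 (f : ℂ → ℂ) : Prop :=
  MemLp f 2 mCirc ∧ ∀ n : ℕ, 1 ≤ n → ∫ z, f z * z ^ n ∂mCirc = 0

/-- `u` is (the boundary function of) an inner function: it is unimodular a.e. on `𝕋`
and its negative Fourier coefficients vanish. -/
def InnerBdry (u : ℂ → ℂ) : Prop :=
  (∀ᵐ z ∂mCirc, ‖u z‖ = 1) ∧ ∀ n : ℕ, 1 ≤ n → ∫ z, u z * z ^ n ∂mCirc = 0

/-- `φ` is (the boundary function of) a function in `H^∞`. -/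
def HinfBdry (φ : ℂ → ℂ) : Prop :=
  MemLp φ ⊤ mCirc ∧ ∀ n : ℕ, 1 ≤ n → ∫ z, φ z * z ^ n ∂mCirc = 0

/-- `f` is a `T_φ`-inner vector: a unit vector with `⟨φ^n f, f⟩ = 0` for all `n ≥ 1`. -/
def TInner (φ f : ℂ → ℂ) : Prop :=
  (∫ z, ‖f z‖ ^ 2 ∂mCirc) = 1 ∧
  ∀ n : ℕ, 1 ≤ n → ∫ z, (φ z) ^ n * (f z * (starRingEnd ℂ) (f z)) ∂mCirc = 0

/-- `f` belongs to the model space `K_u = H² ⊖ u H²`. -/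
def InKu (u f : ℂ → ℂ) : Prop :=
  MemH2 f ∧ ∀ n : ℕ, ∫ z, f z * (starRingEnd ℂ) (u z * z ^ n) ∂mCirc = 0

lemma expMap_measurable : Measurable (fun θ : ℝ => Complex.exp (θ * Complex.I)) := by
  fun_prop

lemma mCirc_ae_norm : ∀ᵐ z ∂mCirc, ‖z‖ = 1 := by
  rw [mCirc, ae_map_iff expMap_measurable.aemeasurable
    (isClosed_eq continuous_norm continuous_const).measurableSet]
  filter_upwards with θ
  simp [Complex.norm_exp_ofReal_mul_I]

lemma mCirc_neg_one : mCirc {(-1 : ℂ)} = 0 := by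
  rw [mCirc, Measure.map_apply expMap_measurable (measurableSet_singleton _)]
  have hc : (Set.Countable ((fun θ : ℝ => Complex.exp (θ * Complex.I)) ⁻¹' {(-1 : ℂ)})) := by
    apply Set.Countable.mono _ (Set.countable_range (fun n : ℤ => Real.pi + n * (2 * Real.pi)))
    intro θ hθ
    simp only [Set.mem_preimage, Set.mem_singleton_iff] at hθ
    have h1 : Complex.exp ((θ - Real.pi) * Complex.I) = 1 := by
      rw [sub_mul, Complex.exp_sub, hθ, Complex.exp_pi_mul_I]
      norm_num
    rw [Complex.exp_eq_one_iff] at h1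
    obtain ⟨n, hn⟩ := h1
    refine ⟨n, ?_⟩
    have h2 : ((θ : ℂ) - Real.pi) * Complex.I = ((n : ℂ) * (2 * Real.pi)) * Complex.I := by
      rw [hn]; ring
    have h2' := mul_right_cancel₀ Complex.I_ne_zero h2
    have h3 : θ - Real.pi = (n : ℝ) * (2 * Real.pi) := by exact_mod_cast h2'
    show Real.pi + n * (2 * Real.pi) = θ
    linarith
  simp [hc.measure_zero]

lemma mCirc_ae_ne_neg_one : ∀ᵐ z ∂mCirc, z ≠ -1 := by
  rw [ae_iff]
  convert mCirc_neg_one using 2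
  ext z; simp

/-- for `φ(z) = 1 + z` there are no `T_φ`-inner functions:
if `f ∈ H²` and `∫_𝕋 (1+ξ)^n |f(ξ)|² dm(ξ) = 0` for all `n ≥ 1`, then `f = 0` a.e. -/
theorem statement5 (f : ℂ → ℂ) (hf : MemH2 f)
    (h : ∀ n : ℕ, 1 ≤ n →
      ∫ z, (1 + z) ^ n * (f z * (starRingEnd ℂ) (f z)) ∂mCirc = 0) :
    ∀ᵐ z ∂mCirc, f z = 0 := by
  have hf : MemLp f 2 mCirc := hf.1

  set g : ℂ → ℂ := fun z => f z * (starRingEnd ℂ) (f z) with hg_def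
  -- g z = ↑(normSq (f z)) = ↑(‖f z‖^2)
  have hg_eq : ∀ z, g z = ((‖f z‖ ^ 2 : ℝ) : ℂ) := by
    intro z
    simp [hg_def, Complex.mul_conj, Complex.normSq_eq_norm_sq]
  have hsq_int : Integrable (fun z => ‖f z‖ ^ 2) mCirc :=
    (memLp_two_iff_integrable_sq_norm hf.aestronglyMeasurable).mp hf
  have hg_int : Integrable g mCirc := by
    rw [funext hg_eq]
    exact hsq_int.ofReal
  have hg_meas : AEStronglyMeasurable g mCirc := hg_int.aestronglyMeasurable
  -- each (1+z)^k * g integrable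
  have hterm_int : ∀ k : ℕ, Integrable (fun z => (1 + z) ^ k * g z) mCirc := by
    intro k
    apply hg_int.bdd_mul (c := 2 ^ k)
    · exact ((continuous_const.add continuous_id).pow k).aestronglyMeasurable
    · filter_upwards [mCirc_ae_norm] with z hz
      rw [norm_pow]
      refine pow_le_pow_left₀ (norm_nonneg _) ?_ k
      calc ‖1 + z‖ ≤ ‖(1:ℂ)‖ + ‖z‖ := norm_add_le _ _
        _ = 2 := by rw [hz]; norm_num
  -- key: ∫ ((1-z)/2)^n g = ∫ g for all n
  have key : ∀ n : ℕ, ∫ z, ((1 - z) / 2) ^ n * g z ∂mCirc = ∫ z, g z ∂mCirc := by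
    intro n
    have expand : ∀ z : ℂ, ((1 - z) / 2) ^ n * g z
        = ∑ k ∈ Finset.range (n + 1),
            ((n.choose k : ℂ) * (-2⁻¹ : ℂ) ^ k) * ((1 + z) ^ k * g z) := by
      intro z
      have h1 : ((1 - z) / 2 : ℂ) = (-2⁻¹ : ℂ) * (1 + z) + 1 := by ring
      rw [h1, add_pow, Finset.sum_mul]
      refine Finset.sum_congr rfl fun k _ => ?_
      rw [mul_pow, one_pow]
      ring
    rw [funext expand] at *
    rw [integral_finset_sum _ (fun k _ => (hterm_int k).const_mul _)]
    rw [Finset.sum_eq_single 0]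
    · simp [integral_const_mul]
    · intro k hk hk0
      rw [integral_const_mul, h k (Nat.one_le_iff_ne_zero.mpr hk0), mul_zero]
    · intro hn; simp at hn
  -- dominated convergence: LHS → 0
  have hlim : Tendsto (fun n : ℕ => ∫ z, ((1 - z) / 2) ^ n * g z ∂mCirc) atTop
      (𝓝 (∫ _z, (0 : ℂ) ∂mCirc)) := by
    apply tendsto_integral_of_dominated_convergence (fun z => ‖g z‖)
    · intro n
      exact (((continuous_const.sub continuous_id).div_const 2).pow n).aestronglyMeasurable.mul hg_meas
    · exact hg_int.norm
    · intro n
      filter_upwards [mCirc_ae_norm] with z hz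
      rw [norm_mul]
      have : ‖((1 - z) / 2 : ℂ) ^ n‖ ≤ 1 := by
        rw [norm_pow]
        refine pow_le_one₀ (norm_nonneg _) ?_
        rw [norm_div]
        rw [div_le_iff₀ (by norm_num : (0:ℝ) < ‖(2:ℂ)‖)]
        calc ‖1 - z‖ ≤ ‖(1:ℂ)‖ + ‖z‖ := norm_sub_le _ _
          _ = 2 := by rw [hz]; norm_num
          _ ≤ 1 * ‖(2:ℂ)‖ := by simp
      calc ‖((1 - z) / 2 : ℂ) ^ n‖ * ‖g z‖ ≤ 1 * ‖g z‖ :=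
            mul_le_mul_of_nonneg_right this (norm_nonneg _)
        _ = ‖g z‖ := one_mul _
    · filter_upwards [mCirc_ae_norm, mCirc_ae_ne_neg_one] with z hz hz1
      have hnorm : ‖((1 - z) / 2 : ℂ)‖ < 1 := by
        rw [norm_div]
        rw [div_lt_iff₀ (by norm_num : (0:ℝ) < ‖(2:ℂ)‖)]
        have h2 : ‖(2:ℂ)‖ = 2 := by simp
        rw [h2, one_mul]
        -- ‖1 - z‖ < 2
        have hre : -1 < z.re := by
          have habs := Complex.abs_re_le_norm z
          rw [hz] at habs
          rcases ((abs_le.mp habs).1).lt_or_eq with h' | h'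
          · exact h'
          · exfalso
            apply hz1
            have hre' : z.re = -1 := h'.symm
            have him : z.im = 0 := by
              have hns : Complex.normSq z = 1 := by
                have := hz
                rw [← Complex.sq_norm] at *
                nlinarith [Complex.sq_norm z, this]
              have : z.re ^ 2 + z.im ^ 2 = 1 := by
                rw [Complex.normSq_apply] at hns; nlinarith
              nlinarith
            apply Complex.ext <;> simp [hre', him]
        have hsq : ‖1 - z‖ ^ 2 < 2 ^ 2 := by
          have : Complex.normSq (1 - z) = 2 - 2 * z.re := by
            have hns : z.re ^ 2 + z.im ^ 2 = 1 := by
              have h1 : Complex.normSq z = 1 := by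
                rw [← Complex.sq_norm, hz]; norm_num
              rw [Complex.normSq_apply] at h1; nlinarith
            rw [Complex.normSq_apply]; simp; nlinarith
          rw [Complex.sq_norm, this]
          nlinarith
        exact lt_of_pow_lt_pow_left₀ 2 (by norm_num) hsq
      have := (tendsto_pow_atTop_nhds_zero_of_norm_lt_one hnorm).mul_const (g z)
      simpa using this
  rw [funext (fun n => key n)] at hlim
  simp only [integral_zero] at hlim
  have hg0 : ∫ z, g z ∂mCirc = 0 := tendsto_nhds_unique tendsto_const_nhds hlim
  -- conclude
  rw [funext hg_eq] at hg0
  have hreal : ∫ z, ‖f z‖ ^ 2 ∂mCirc = 0 := by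
    have h2 : ∫ z, ((‖f z‖ ^ 2 : ℝ) : ℂ) ∂mCirc = ((∫ z, ‖f z‖ ^ 2 ∂mCirc : ℝ) : ℂ) :=
      integral_ofReal
    have h3 : ((∫ z, ‖f z‖ ^ 2 ∂mCirc : ℝ) : ℂ) = 0 := by rw [← h2]; exact hg0
    exact_mod_cast h3
  have := (integral_eq_zero_iff_of_nonneg (fun z => sq_nonneg _) hsq_int).mp hreal
  filter_upwards [this] with z hz
  exact norm_eq_zero.mp ((pow_eq_zero_iff two_ne_zero).mp hz)
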